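/- Let (K; ψ) be a topological system whose Koopman operator T on C(K) has one-dimensional fixed space. Then the group G_2 := ker(Λ²) (with Λf = Tf·conj(f) on C(K;𝕋)) consists exactly of the unimodular eigenfunctions of T corresponding to unimodular eigenvalues: f ∈ C(K;𝕋) satisfies Λ²f = 1 if and only if Tf = λf for some λ ∈ 𝕋. -/

import Mathlib

/-- If the Koopman operator `T f = f ∘ ψ` of a topological system has
one-dimensional fixed space, then a unimodular `f ∈ C(K;𝕋)` satisfies
`Λ² f = 1` (i.e. `f ∈ G₂`) iff `f` is an eigenfunction of `T` with a
unimodular eigenvalue. -/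
theorem stmt11 {K : Type*} [TopologicalSpace K] [CompactSpace K] [T2Space K]
    (ψ : C(K, K))
    (Λ : C(K, ℂ) → C(K, ℂ)) (hΛ : ∀ f, Λ f = f.comp ψ * star f)
    (hfix : ∀ f : C(K, ℂ), f.comp ψ = f → ∃ c : ℂ, f = ContinuousMap.const K c)
    (f : C(K, ℂ)) (hf : ∀ x, ‖f x‖ = 1) :
    Λ (Λ f) = 1 ↔ ∃ c : ℂ, ‖c‖ = 1 ∧ f.comp ψ = c • f := by
  have unit : ∀ z : ℂ, ‖z‖ = 1 → (starRingEnd ℂ) z * z = 1 := by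
    intro z hz
    rw [mul_comm, Complex.mul_conj, Complex.normSq_eq_norm_sq, hz]
    norm_num
  have key : ∀ x, (starRingEnd ℂ) (f x) * f x = 1 := fun x => unit _ (hf x)
  have hΛapp : ∀ x, (Λ f) x = f (ψ x) * (starRingEnd ℂ) (f x) := by
    intro x; rw [hΛ]; simp [Complex.star_def]
  have hΛnorm : ∀ x, ‖(Λ f) x‖ = 1 := by
    intro x
    rw [hΛapp x, norm_mul, hf, RingHomIsometric.norm_map, hf]
    norm_num
  constructor
  · intro h
    -- Λ f is a fixed function of the Koopman operator
    have hfixΛ : (Λ f).comp ψ = Λ f := by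
      ext x
      have hx : (Λ f) (ψ x) * (starRingEnd ℂ) ((Λ f) x) = 1 := by
        have := congrArg (fun g : C(K, ℂ) => g x) h
        simpa [hΛ (Λ f), Complex.star_def] using this
      have : (Λ f) (ψ x) * ((starRingEnd ℂ) ((Λ f) x) * (Λ f) x) = (Λ f) x := by
        rw [← mul_assoc, hx, one_mul]
      rw [unit _ (hΛnorm x), mul_one] at this
      simpa using this
    obtain ⟨c, hc⟩ := hfix _ hfixΛ
    rcases isEmpty_or_nonempty K with hK | hK
    · exact ⟨1, by norm_num, by ext x; exact absurd (Set.mem_univ x) (by simp [hK.false x])⟩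
    · obtain ⟨x₀⟩ := hK
      have hcnorm : ‖c‖ = 1 := by
        have := hΛnorm x₀
        rw [hc] at this
        simpa using this
      refine ⟨c, hcnorm, ?_⟩
      ext x
      have hx : (Λ f) x = c := by rw [hc]; rfl
      rw [hΛapp x] at hx
      have : f (ψ x) * ((starRingEnd ℂ) (f x) * f x) = c * f x := by
        rw [← mul_assoc, hx]
      rw [key x, mul_one] at this
      simpa using this
  · rintro ⟨c, hc, hcomp⟩
    have hΛconst : ∀ x, (Λ f) x = c := by
      intro x
      rw [hΛapp x]
      have hfx : f (ψ x) = c * f x := by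
        have := congrArg (fun g : C(K, ℂ) => g x) hcomp
        simpa using this
      rw [hfx, mul_assoc, mul_comm (f x), key x, mul_one]
    ext x
    rw [hΛ (Λ f)]
    simp only [ContinuousMap.mul_apply, ContinuousMap.comp_apply, ContinuousMap.star_apply,
      ContinuousMap.one_apply, Complex.star_def]
    rw [hΛconst, hΛconst, mul_comm]
    exact unit _ hc
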